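/- arXiv:1305.0943 — 6 statements merged into one kernel-verified Lean document; each statement's English description precedes it below -/
import Mathlib

section
/- Let t ≥ 2 and let n_1,…,n_{2t−1} be nonnegative integers each divisible by t. Then there exists a finite multiset of t-approval votes over 2t candidates c_0,…,c_{2t−1} such that the approval score of c_i minus the approval score of c_0 equals n_i for each i ∈ {1,…,2t−1} (in particular c_0 has minimum score). Moreover this can be achieved with (2t−1)(Σ n_i)/t votes. -/
private def emb (t : ℕ) (i : Fin (2*t)) (j : Fin (2*t-1)) : Fin (2*t) :=
  if j.val < i.val then ⟨j.val, by have := j.isLt; omega⟩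
  else ⟨j.val + 1, by have := j.isLt; omega⟩

private lemma emb_ne (t : ℕ) (i : Fin (2*t)) (j : Fin (2*t-1)) : emb t i j ≠ i := by
  unfold emb; split <;> (intro h; apply_fun Fin.val at h; simp at h; omega)

private lemma emb_inj (t : ℕ) (i : Fin (2*t)) : Function.Injective (emb t i) := by
  intro a b h
  unfold emb at h
  apply Fin.ext
  split at h <;> split at h <;> (apply_fun Fin.val at h; simp at h; omega)

private def idx (t : ℕ) (i c : Fin (2*t)) : Fin (2*t-1) :=
  if h : c.val < i.val then ⟨c.val, by have := c.isLt; have := i.isLt; omega⟩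
  else ⟨c.val - 1, by have := c.isLt; omega⟩

private lemma emb_idx (t : ℕ) (i c : Fin (2*t)) (h : c ≠ i) : emb t i (idx t i c) = c := by
  have hci : c.val ≠ i.val := fun hh => h (Fin.ext hh)
  apply Fin.ext
  unfold idx
  split <;> rename_i h1 <;> unfold emb <;> split <;> rename_i h2 <;> simp_all <;> omega

private def vote (t : ℕ) (i : Fin (2*t)) (k : Fin (2*t-1)) : Finset (Fin (2*t)) :=
  insert i (Finset.image (fun j : Fin (t-1) =>
    emb t i (k + Fin.castLE (by omega) j)) Finset.univ)

private lemma card_vote (t : ℕ) (ht : 2 ≤ t) (i : Fin (2*t)) (k : Fin (2*t-1)) :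
    (vote t i k).card = t := by
  unfold vote
  rw [Finset.card_insert_of_notMem, Finset.card_image_of_injective]
  · simp; omega
  · intro a b h
    exact Fin.castLE_injective _ (add_right_injective k (emb_inj t i h))
  · simp only [Finset.mem_image]
    rintro ⟨j, -, hj⟩
    exact emb_ne t i _ hj

private lemma mem_vote (t : ℕ) (ht : 2 ≤ t) (i c : Fin (2*t)) (h : c ≠ i) (k : Fin (2*t-1)) :
    c ∈ vote t i k ↔ (idx t i c - k).val < t - 1 := by
  haveI : NeZero (2*t-1) := ⟨by omega⟩
  unfold vote
  simp only [Finset.mem_insert, h, false_or, Finset.mem_image, Finset.mem_univ, true_and]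
  constructor
  · rintro ⟨j, hj⟩
    have : k + Fin.castLE (by omega) j = idx t i c := by
      apply emb_inj t i
      rw [hj, emb_idx t i c h]
    have hv : (idx t i c - k) = Fin.castLE (by omega) j := by
      rw [← this]; abel
    rw [hv]
    simpa using j.isLt
  · intro hv
    refine ⟨⟨(idx t i c - k).val, hv⟩, ?_⟩
    have : k + Fin.castLE (by omega : t - 1 ≤ 2*t-1) (⟨(idx t i c - k).val, hv⟩ : Fin (t-1))
        = idx t i c := by
      apply Fin.ext
      have : (Fin.castLE (by omega : t - 1 ≤ 2*t-1) (⟨(idx t i c - k).val, hv⟩ : Fin (t-1)))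
          = idx t i c - k := by apply Fin.ext; simp
      rw [this]; simp
    rw [this, emb_idx t i c h]

private lemma card_filter_lt (m b : ℕ) (hb : b ≤ m) :
    (Finset.univ.filter (fun r : Fin m => r.val < b)).card = b := by
  have : Finset.univ.filter (fun r : Fin m => r.val < b)
      = Finset.image (Fin.castLE hb) Finset.univ := by
    ext r
    simp only [Finset.mem_filter, Finset.mem_univ, true_and, Finset.mem_image]
    constructor
    · intro hr; exact ⟨⟨r.val, hr⟩, by apply Fin.ext; simp⟩
    · rintro ⟨j, -, rfl⟩; simpa using j.isLt
  rw [this, Finset.card_image_of_injective _ (Fin.castLE_injective hb)]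
  simp

private lemma count_vote (t : ℕ) (ht : 2 ≤ t) (i c : Fin (2*t)) :
    (Finset.univ.filter (fun k : Fin (2*t-1) => c ∈ vote t i k)).card
      = if c = i then 2*t-1 else t-1 := by
  haveI : NeZero (2*t-1) := ⟨by omega⟩
  split
  · rename_i h
    subst h
    have : Finset.univ.filter (fun k : Fin (2*t-1) => c ∈ vote t c k) = Finset.univ := by
      ext k; simp [vote]
    rw [this]; simp
  · rename_i h
    rw [Finset.filter_congr (fun k _ => by rw [mem_vote t ht i c h k])]
    have : Finset.univ.filter (fun k : Fin (2*t-1) => (idx t i c - k).val < t - 1)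
        = Finset.map (Equiv.subLeft (idx t i c)).toEmbedding
            (Finset.univ.filter (fun r : Fin (2*t-1) => r.val < t - 1)) := by
      ext k
      simp only [Finset.mem_filter, Finset.mem_univ, true_and, Finset.mem_map,
        Equiv.coe_toEmbedding, Equiv.subLeft_apply]
      constructor
      · intro hk
        exact ⟨idx t i c - k, hk, by abel⟩
      · rintro ⟨r, hr, rfl⟩
        simpa using hr
    rw [this, Finset.card_map, card_filter_lt _ _ (by omega)]

private lemma filter_sum_multiset {ι α : Type*} (p : α → Prop) [DecidablePred p]
    (s : Finset ι) (f : ι → Multiset α) :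
    (∑ i ∈ s, f i).filter p = ∑ i ∈ s, (f i).filter p := by
  induction s using Finset.cons_induction with
  | empty => simp
  | cons a s ha ih => simp [Finset.sum_cons, Multiset.filter_add, ih]

private lemma card_sum_multiset {ι α : Type*} (s : Finset ι) (f : ι → Multiset α) :
    Multiset.card (∑ i ∈ s, f i) = ∑ i ∈ s, Multiset.card (f i) := by
  induction s using Finset.cons_induction with
  | empty => simp
  | cons a s ha ih => simp [Finset.sum_cons, ih]

private lemma mem_of_mem_nsmul {α : Type*} {s : Multiset α} {a : α} {k : ℕ}
    (h : a ∈ k • s) : a ∈ s := by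
  induction k with
  | zero => simp at h
  | succ k ih =>
    rw [succ_nsmul] at h
    rcases Multiset.mem_add.mp h with h | h
    · exact ih h
    · exact h

/-- For `t ≥ 2` and nonnegative integers `n i` (for the `2t − 1` candidates
other than candidate `0`), each divisible by `t`, there is a finite multiset of `t`-approval
votes over `2t` candidates such that the approval score of candidate `i` minus the score of
candidate `0` is exactly `n i`; moreover this is achieved with `(2t−1)·(Σ n_i)/t` votes. -/
theorem stmt1 (t : ℕ) (ht : 2 ≤ t) (n : Fin (2 * t) → ℕ)
    (hn0 : n ⟨0, by omega⟩ = 0) (hdvd : ∀ i, t ∣ n i) :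
    ∃ votes : Multiset (Finset (Fin (2 * t))),
      (∀ v ∈ votes, v.card = t) ∧
      (∀ i : Fin (2 * t),
        Multiset.card (votes.filter (fun v => i ∈ v)) =
          Multiset.card (votes.filter (fun v => (⟨0, by omega⟩ : Fin (2 * t)) ∈ v)) + n i) ∧
      Multiset.card votes = (2 * t - 1) * (∑ i, n i) / t := by
  haveI : NeZero (2*t-1) := ⟨by omega⟩
  set block : Fin (2*t) → Multiset (Finset (Fin (2*t))) :=
    fun i => Multiset.map (vote t i) Finset.univ.val with hblock
  have hscore : ∀ c : Fin (2*t),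
      Multiset.card ((∑ i : Fin (2*t), (n i / t) • block i).filter (fun v => c ∈ v))
        = (∑ i : Fin (2*t), n i / t) * (t-1) + (n c / t) * t := by
    intro c
    rw [filter_sum_multiset, card_sum_multiset]
    have hterm : ∀ i : Fin (2*t),
        Multiset.card (((n i / t) • block i).filter (fun v => c ∈ v))
          = (n i / t) * (if c = i then 2*t-1 else t-1) := by
      intro i
      rw [Multiset.filter_nsmul, Multiset.card_nsmul]
      congr 1
      rw [hblock]
      rw [Multiset.filter_map, Multiset.card_map]
      have : Multiset.card (Multiset.filter ((fun v => c ∈ v) ∘ vote t i) Finset.univ.val)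
          = (Finset.univ.filter (fun k : Fin (2*t-1) => c ∈ vote t i k)).card := by
        rw [Finset.card_def, Finset.filter_val]
        rfl
      rw [this, count_vote t ht i c]
    rw [Finset.sum_congr rfl (fun i _ => hterm i)]
    have hsplit : ∀ i : Fin (2*t),
        (n i / t) * (if c = i then 2*t-1 else t-1)
          = (n i / t) * (t-1) + (if c = i then (n i / t) * t else 0) := by
      intro i
      split
      · rw [show 2*t-1 = (t-1)+t from by omega, Nat.mul_add]
      · simp
    rw [Finset.sum_congr rfl (fun i _ => hsplit i), Finset.sum_add_distrib,
      Finset.sum_ite_eq Finset.univ c (fun i => n i / t * t)]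
    simp [Finset.sum_mul]
  refine ⟨∑ i : Fin (2*t), (n i / t) • block i, ?_, ?_, ?_⟩
  · intro v hv
    rw [Multiset.mem_sum] at hv
    obtain ⟨i, -, hv⟩ := hv
    have hv' : v ∈ block i := mem_of_mem_nsmul hv
    rw [hblock] at hv'
    obtain ⟨k, -, rfl⟩ := Multiset.mem_map.mp hv'
    exact card_vote t ht i k
  · intro i
    rw [hscore, hscore, hn0]
    simp [Nat.div_mul_cancel (hdvd i)]
  · rw [card_sum_multiset]
    have hcb : ∀ i : Fin (2*t), Multiset.card ((n i / t) • block i) = (n i / t) * (2*t-1) := by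
      intro i
      rw [Multiset.card_nsmul, hblock]
      simp
    rw [Finset.sum_congr rfl (fun i _ => hcb i), ← Finset.sum_mul]
    have hS : t * (∑ i, n i / t) = ∑ i, n i := by
      rw [Finset.mul_sum]
      exact Finset.sum_congr rfl (fun i _ => Nat.mul_div_cancel' (hdvd i))
    rw [← hS, mul_left_comm, Nat.mul_div_cancel_left _ (by omega : 0 < t), mul_comm]
end

section
/- Fix a t-approval weighted election with registered voters V and unregistered voters W, all of whom approve the preferred candidate p. If some subcollection W' ⊆ W of size ℓ, all of whose votes approve exactly the same set S of t candidates (with p ∈ S), can be added (possibly together with other unregistered voters) to make p a winner, then replacing W' by the ℓ heaviest voters of W approving exactly S (keeping the other added voters fixed) also makes p a winner. -/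
/-- Approval score: total weight of voters approving candidate `c`; each voter is a pair
(weight, approval set). -/
def appScore {C : Type*} [DecidableEq C] (M : Multiset (ℕ × Finset C)) (c : C) : ℕ :=
  (M.map (fun v => if c ∈ v.2 then v.1 else 0)).sum

private lemma sum_le_sum_aux (A : Multiset ℕ) : ∀ B : Multiset ℕ,
    Multiset.card A = Multiset.card B → (∀ a ∈ A, ∀ b ∈ B, a ≤ b) → A.sum ≤ B.sum := by
  induction A using Multiset.induction with
  | empty => intro B _ _; simp
  | cons a A ih =>
    intro B hcard h
    have hB : ∃ b, b ∈ B := by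
      rw [← Multiset.card_pos_iff_exists_mem]
      simp at hcard; omega
    obtain ⟨b, hb⟩ := hB
    obtain ⟨B', rfl⟩ := Multiset.exists_cons_of_mem hb
    simp only [Multiset.sum_cons]
    have hab : a ≤ b := h a (Multiset.mem_cons_self a A) b (Multiset.mem_cons_self b B')
    refine add_le_add hab (ih B' ?_ ?_)
    · simpa using hcard
    · intro x hx y hy
      exact h x (Multiset.mem_cons_of_mem hx) y (Multiset.mem_cons_of_mem hy)

/-- In weighted `t`-approval, if some subcollection `W' ⊆ W` of size `ℓ`, all
of whose votes approve exactly the same size-`t` set `S ∋ p`, can be added (together with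
other added voters `rest`, which do not approve exactly `S`) to make `p` a winner, then
replacing `W'` by the `ℓ` heaviest voters `H` of `W` approving exactly `S` (keeping `rest`
fixed) also makes `p` a winner. -/
theorem stmt9 {C : Type*} [DecidableEq C] (t : ℕ)
    (V W : Multiset (ℕ × Finset C)) (p : C)
    (hW : ∀ w ∈ W, p ∈ w.2 ∧ w.2.card = t)
    (S : Finset C) (hpS : p ∈ S) (hS : S.card = t)
    (W' rest H : Multiset (ℕ × Finset C)) (ℓ : ℕ)
    (hW'sub : W' ≤ W.filter (fun w => w.2 = S))
    (hW'card : Multiset.card W' = ℓ)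
    (hrest : rest ≤ W - W')
    (hrestS : ∀ w ∈ rest, w.2 ≠ S)
    (hwin : ∀ c, appScore (V + W' + rest) c ≤ appScore (V + W' + rest) p)
    (hH : H ≤ W.filter (fun w => w.2 = S))
    (hHcard : Multiset.card H = ℓ)
    (hheavy : ∀ h ∈ H, ∀ w ∈ W.filter (fun w => w.2 = S) - H, w.1 ≤ h.1) :
    ∀ c, appScore (V + H + rest) c ≤ appScore (V + H + rest) p := by
  have hadd : ∀ (A B : Multiset (ℕ × Finset C)) (c : C),
      appScore (A + B) c = appScore A c + appScore B c := by
    intro A B c; simp [appScore]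
  -- score of a multiset all of whose members approve exactly S
  have hscoreS : ∀ (M : Multiset (ℕ × Finset C)), (∀ w ∈ M, w.2 = S) → ∀ c,
      appScore M c = if c ∈ S then (M.map Prod.fst).sum else 0 := by
    intro M hM c
    unfold appScore
    by_cases hc : c ∈ S
    · simp only [hc, if_true]
      congr 1
      apply Multiset.map_congr rfl
      intro x hx
      rw [hM x hx]
      simp [hc]
    · simp only [hc, if_false]
      have : M.map (fun v => if c ∈ v.2 then v.1 else 0) = M.map (fun _ => 0) := by
        apply Multiset.map_congr rfl
        intro x hx
        rw [hM x hx]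
        simp [hc]
      rw [this]
      simp
  have hW'S : ∀ w ∈ W', w.2 = S := by
    intro w hw
    have := Multiset.mem_of_le hW'sub hw
    exact (Multiset.mem_filter.mp this).2
  have hHS : ∀ w ∈ H, w.2 = S := by
    intro w hw
    have := Multiset.mem_of_le hH hw
    exact (Multiset.mem_filter.mp this).2
  -- key inequality on weights
  have hsum : (W'.map Prod.fst).sum ≤ (H.map Prod.fst).sum := by
    have hsplitW' : W' - H + W' ∩ H = W' := Multiset.sub_add_inter W' H
    have hsplitH : H - W' + W' ∩ H = H := by
      rw [Multiset.inter_comm]; exact Multiset.sub_add_inter H W'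
    have hcard : Multiset.card (W' - H) = Multiset.card (H - W') := by
      have c1 := congrArg Multiset.card hsplitW'
      have c2 := congrArg Multiset.card hsplitH
      simp only [Multiset.card_add] at c1 c2
      omega
    have hle : ((W' - H).map Prod.fst).sum ≤ ((H - W').map Prod.fst).sum := by
      apply sum_le_sum_aux
      · simp [hcard]
      · intro a ha b hb
        obtain ⟨w, hw, rfl⟩ := Multiset.mem_map.mp ha
        obtain ⟨h, hh, rfl⟩ := Multiset.mem_map.mp hb
        have hwF : w ∈ W.filter (fun w => w.2 = S) - H :=
          Multiset.mem_of_le (tsub_le_tsub_right hW'sub H) hw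
        have hhH : h ∈ H := Multiset.mem_of_le (tsub_le_self) hh
        exact hheavy h hhH w hwF
    calc (W'.map Prod.fst).sum
        = ((W' - H).map Prod.fst).sum + ((W' ∩ H).map Prod.fst).sum := by
          rw [← Multiset.sum_add, ← Multiset.map_add, hsplitW']
      _ ≤ ((H - W').map Prod.fst).sum + ((W' ∩ H).map Prod.fst).sum := by
          exact add_le_add_left hle _
      _ = (H.map Prod.fst).sum := by
          rw [← Multiset.sum_add, ← Multiset.map_add, hsplitH]
  intro c
  have h1 := hwin c
  rw [hadd, hadd, hadd, hadd, hscoreS W' hW'S, hscoreS W' hW'S] at h1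
  rw [hadd, hadd, hadd, hadd, hscoreS H hHS, hscoreS H hHS]
  simp only [hpS, if_true] at h1 ⊢
  by_cases hc : c ∈ S
  · simp only [hc, if_true] at h1 ⊢
    omega
  · simp only [hc, if_false] at h1 ⊢
    omega
end

section
/- GBW lower bound for t-approval WCCAV: for every t ≥ 2 there is an instance of weighted constructive control by adding voters under t-approval — namely, candidates {p, a_1,…,a_t, d_1,…,d_{t−1}}, one registered voter of weight 2t approving exactly {a_1,…,a_t}, one unregistered voter 'nice' of weight 2t approving {p, d_1,…,d_{t−1}}, and for each j ∈ {1,…,t} one unregistered voter α_j of weight 3t approving {p} ∪ {a_i : i ≠ j} — such that adding the single voter 'nice' makes p a winner, while adding any proper subcollection of {α_1,…,α_t} (and no other voters) fails to make p a winner but adding all t voters α_1,…,α_t makes p a winner. -/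
/-- The `2t` candidates: `none` is the preferred candidate `p`, `some (inl i)` is `a_i`
(for `i : Fin t`), and `some (inr j)` is `d_j` (for `j : Fin (t-1)`). -/
def Cand13 (t : ℕ) : Type := Option (Fin t ⊕ Fin (t - 1))

instance (t : ℕ) : DecidableEq (Cand13 t) := by unfold Cand13; infer_instance

/-- Approval score: total weight of voters approving candidate `c`. -/
def appScore13 {t : ℕ} (M : Multiset (ℕ × Finset (Cand13 t))) (c : Cand13 t) : ℕ :=
  (M.map (fun u => if c ∈ u.2 then u.1 else 0)).sum

/-- The single registered voter: weight `2t`, approving exactly `{a_1,…,a_t}`. -/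
def reg13 (t : ℕ) : Multiset (ℕ × Finset (Cand13 t)) :=
  {(2 * t, Finset.univ.image (fun i : Fin t => (some (Sum.inl i) : Cand13 t)))}

/-- The unregistered voter `nice`: weight `2t`, approving `{p, d_1,…,d_{t-1}}`. -/
def nice13 (t : ℕ) : ℕ × Finset (Cand13 t) :=
  (2 * t, insert (none : Cand13 t)
    (Finset.univ.image (fun j : Fin (t - 1) => (some (Sum.inr j) : Cand13 t))))

/-- The unregistered voter `α_j`: weight `3t`, approving `{p} ∪ {a_i : i ≠ j}`. -/
def alpha13 (t : ℕ) (j : Fin t) : ℕ × Finset (Cand13 t) :=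
  (3 * t, insert (none : Cand13 t)
    ((Finset.univ.erase j).image (fun i : Fin t => (some (Sum.inl i) : Cand13 t))))

instance decMem13 {t : ℕ} (x : Option (Fin t ⊕ Fin (t - 1))) (s : Finset (Cand13 t)) :
    Decidable (x ∈ s) :=
  inferInstanceAs (Decidable (@id (Cand13 t) x ∈ s))

lemma score_add {t} (M N : Multiset (ℕ × Finset (Cand13 t))) (c) :
    appScore13 (M + N) c = appScore13 M c + appScore13 N c := by
  simp [appScore13]

lemma score_reg_none {t} : appScore13 (reg13 t) (none : Cand13 t) = 0 := by
  unfold appScore13 reg13 Cand13 at *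
  simp
lemma score_reg_inl {t} (i : Fin t) :
    appScore13 (reg13 t) (some (Sum.inl i) : Cand13 t) = 2*t := by
  unfold appScore13 reg13 Cand13 at *
  simp
lemma score_reg_inr {t} (d : Fin (t-1)) :
    appScore13 (reg13 t) (some (Sum.inr d) : Cand13 t) = 0 := by
  unfold appScore13 reg13 Cand13 at *
  simp

lemma score_nice_none {t} : appScore13 {nice13 t} (none : Cand13 t) = 2*t := by
  unfold appScore13 nice13 Cand13 at *
  simp
lemma score_nice_inl {t} (i : Fin t) :
    appScore13 {nice13 t} (some (Sum.inl i) : Cand13 t) = 0 := by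
  unfold appScore13 nice13 Cand13 at *
  simp
  exact fun h => by
    obtain ⟨k, _, e⟩ := Finset.mem_image.mp h
    exact absurd (Option.some.inj e) Sum.inr_ne_inl
lemma score_nice_inr {t} (d : Fin (t-1)) :
    appScore13 {nice13 t} (some (Sum.inr d) : Cand13 t) = 2*t := by
  unfold appScore13 nice13 Cand13 at *
  simp
  exact fun h => absurd (Finset.mem_image_of_mem _ (Finset.mem_univ d)) h

lemma mem_alpha_none {t} (j : Fin t) : (none : Cand13 t) ∈ (alpha13 t j).2 := by
  exact Finset.mem_insert_self _ _
lemma mem_alpha_inl {t} (i j : Fin t) :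
    (some (Sum.inl i) : Cand13 t) ∈ (alpha13 t j).2 ↔ i ≠ j := by
  unfold alpha13 Cand13 at *
  simp
  exact Finset.mem_image.trans ⟨fun ⟨k, hk, e⟩ => by
      obtain rfl := Sum.inl.inj (Option.some.inj e); simpa using hk,
    fun h => ⟨i, by simpa using h, rfl⟩⟩
lemma not_mem_alpha_inr {t} (j : Fin t) (d : Fin (t-1)) :
    (some (Sum.inr d) : Cand13 t) ∉ (alpha13 t j).2 := by
  unfold alpha13 Cand13 at *
  simp
  exact fun h => by
    obtain ⟨k, _, e⟩ := Finset.mem_image.mp h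
    exact Sum.inl_ne_inr (Option.some.inj e)

lemma scoreJ {t} (J : Finset (Fin t)) (c : Cand13 t) :
    appScore13 (J.val.map (alpha13 t)) c
      = ∑ j ∈ J, (if c ∈ (alpha13 t j).2 then 3*t else 0) := by
  simp only [appScore13, Multiset.map_map, Finset.sum, Function.comp]
  rfl

/-- GBW lower bound for `t`-approval WCCAV (`t ≥ 2`): adding the single voter
`nice` makes `p` a winner; adding any proper subcollection of `{α_1,…,α_t}` (and nothing
else) fails to make `p` a winner; but adding all `t` voters `α_1,…,α_t` makes `p` a winner. -/
theorem stmt13 (t : ℕ) (ht : 2 ≤ t) :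
    (∀ c, appScore13 (reg13 t + {nice13 t}) c ≤ appScore13 (reg13 t + {nice13 t}) none) ∧
    (∀ J : Finset (Fin t), J ≠ Finset.univ →
      ¬ (∀ c, appScore13 (reg13 t + J.val.map (alpha13 t)) c ≤
              appScore13 (reg13 t + J.val.map (alpha13 t)) none)) ∧
    (∀ c, appScore13 (reg13 t + (Finset.univ : Finset (Fin t)).val.map (alpha13 t)) c ≤
          appScore13 (reg13 t + (Finset.univ : Finset (Fin t)).val.map (alpha13 t)) none) := by

  refine ⟨?_, ?_, ?_⟩
  · intro c
    erw [score_add, score_add, score_reg_none, score_nice_none]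
    rcases c with _ | (i | d)
    · rw [score_reg_none, score_nice_none]
    · rw [score_reg_inl, score_nice_inl]; omega
    · rw [score_reg_inr, score_nice_inr]
  · intro J hJ hcon
    have hi : ∃ i, i ∉ J := by
      by_contra h
      push_neg at h
      exact hJ (Finset.eq_univ_iff_forall.mpr h)
    obtain ⟨i, hi⟩ := hi
    have hc := hcon (some (Sum.inl i))
    erw [score_add, score_add, scoreJ, scoreJ, score_reg_inl, score_reg_none] at hc
    have h1 : ∑ j ∈ J, (if (none : Cand13 t) ∈ (alpha13 t j).2 then 3*t else 0)
        = ∑ j ∈ J, 3*t :=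
      Finset.sum_congr rfl (fun j _ => if_pos (mem_alpha_none j))
    have h2 : ∑ j ∈ J, (if (some (Sum.inl i) : Cand13 t) ∈ (alpha13 t j).2 then 3*t else 0)
        = ∑ j ∈ J, 3*t :=
      Finset.sum_congr rfl (fun j hj =>
        if_pos ((mem_alpha_inl i j).mpr (fun e => hi (e ▸ hj))))
    erw [h1, h2] at hc
    omega
  · intro c
    erw [score_add, score_add, scoreJ, scoreJ]
    have h1 : ∑ j : Fin t, (if (none : Cand13 t) ∈ (alpha13 t j).2 then 3*t else 0)
        = ∑ _j : Fin t, 3*t :=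
      Finset.sum_congr rfl (fun j _ => if_pos (mem_alpha_none j))
    erw [h1, score_reg_none]
    rcases c with _ | (i | d)
    · erw [score_reg_none, h1]
    · rw [score_reg_inl]
      have h3 : ∑ j : Fin t, (if (some (Sum.inl i) : Cand13 t) ∈ (alpha13 t j).2 then 3*t else 0)
          = ∑ j : Fin t, (if i = j then 0 else 3*t) :=
        Finset.sum_congr rfl (fun j _ => by by_cases h : i = j <;> simp [mem_alpha_inl, h])
      have h4 : ∑ j : Fin t, (if i = j then 3*t else 0) = 3*t := by
        rw [Finset.sum_ite_eq]; simp
      have h5 : (∑ j : Fin t, (if i = j then 0 else 3*t)) + ∑ j : Fin t, (if i = j then 3*t else 0)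
          = ∑ _j : Fin t, 3*t := by
        rw [← Finset.sum_add_distrib]
        exact Finset.sum_congr rfl (fun j _ => by by_cases h : i = j <;> simp [h])
      erw [h3]
      omega
    · rw [score_reg_inr]
      have h6 : ∑ j : Fin t, (if (some (Sum.inr d) : Cand13 t) ∈ (alpha13 t j).2 then 3*t else 0)
          = 0 :=
        Finset.sum_eq_zero (fun j _ => if_neg (not_mem_alpha_inr j d))
      erw [h6]
      omega
end

section
/- In the WCCDV-for-2-approval hardness construction from X3C′, the forward direction holds: if 𝒮 contains an exact cover of B (t sets whose union is B), then deleting the n−t weight-2 voters corresponding to sets not in the cover together with the 3t weight-1 voters corresponding to the sets in the cover (one per element occurrence used by the cover) makes p a winner: afterwards score(p) = 2 is unchanged, each score(s_i) decreases by at least 2 to at most 2, each score(s'_i) decreases to at most 2, each score(b_j) decreases by 1 to 2, and each dummy d_j has score at most 2. -/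
/-- Candidates for the X3C′-based WCCDV-for-2-approval construction: `none` is `p`;
`some (inl j)` is `b_j`; `some (inr (inl i))` is `s_i`; `some (inr (inr (inl i)))` is
`s'_i`; `some (inr (inr (inr j)))` is the dummy `d_j` (`j : Fin (3t+1)`). -/
def Cand14 (t n : ℕ) : Type :=
  Option (Fin (3 * t) ⊕ Fin n ⊕ Fin n ⊕ Fin (3 * t + 1))

instance (t n : ℕ) : DecidableEq (Cand14 t n) := by unfold Cand14; infer_instance

def pC {t n : ℕ} : Cand14 t n := none
def bC {t n : ℕ} (j : Fin (3 * t)) : Cand14 t n := some (Sum.inl j)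
def sC {t n : ℕ} (i : Fin n) : Cand14 t n := some (Sum.inr (Sum.inl i))
def s'C {t n : ℕ} (i : Fin n) : Cand14 t n := some (Sum.inr (Sum.inr (Sum.inl i)))
def dC {t n : ℕ} (j : Fin (3 * t + 1)) : Cand14 t n := some (Sum.inr (Sum.inr (Sum.inr j)))

/-- Approval score: total weight of voters approving candidate `c`. -/
def appScore14 {t n : ℕ} (M : Multiset (ℕ × Finset (Cand14 t n))) (c : Cand14 t n) : ℕ :=
  (M.map (fun u => if c ∈ u.2 then u.1 else 0)).sum

/-- The voters associated with the set `S_i = {b_{e i 0}, b_{e i 1}, b_{e i 2}}`: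
one weight-2 voter approving `{s_i, s'_i}` and three weight-1 voters approving
`{s_i, b_{i1}}`, `{s_i, b_{i2}}`, `{s'_i, b_{i3}}`. -/
def perSet14 (t n : ℕ) (e : Fin n → Fin 3 → Fin (3 * t)) (i : Fin n) :
    Multiset (ℕ × Finset (Cand14 t n)) :=
  {(2, {sC i, s'C i}), (1, {sC i, bC (e i 0)}), (1, {sC i, bC (e i 1)}),
   (1, {s'C i, bC (e i 2)})}

/-- The whole election: the per-set voters, one weight-2 voter approving `{p, d_0}`, and
for each `j`, `3 − ℓ_j` weight-1 voters approving `{b_j, d_{j+1}}`, where `ℓ_j` is the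
number of sets containing `b_j`. -/
def election14 (t n : ℕ) (S : Fin n → Finset (Fin (3 * t)))
    (e : Fin n → Fin 3 → Fin (3 * t)) : Multiset (ℕ × Finset (Cand14 t n)) :=
  (∑ i, perSet14 t n e i) + {(2, ({pC, dC 0} : Finset (Cand14 t n)))} +
    ∑ j : Fin (3 * t),
      Multiset.replicate (3 - (Finset.univ.filter (fun i => j ∈ S i)).card)
        (1, ({bC j, dC j.succ} : Finset (Cand14 t n)))

/-- The deleted voters: the weight-2 voters `{s_i, s'_i}` for the sets not in the cover
`I`, and the three weight-1 voters for each set in the cover. -/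
def deleted14 (t n : ℕ) (e : Fin n → Fin 3 → Fin (3 * t)) (I : Finset (Fin n)) :
    Multiset (ℕ × Finset (Cand14 t n)) :=
  ((Finset.univ \ I).val.map (fun i => (2, ({sC i, s'C i} : Finset (Cand14 t n))))) +
  (I.val.map (fun i => (1, ({sC i, bC (e i 0)} : Finset (Cand14 t n))))) +
  (I.val.map (fun i => (1, ({sC i, bC (e i 1)} : Finset (Cand14 t n))))) +
  (I.val.map (fun i => (1, ({s'C i, bC (e i 2)} : Finset (Cand14 t n)))))

section Aux
variable {t n : ℕ}

abbrev Cand14' (t n : ℕ) := Option (Fin (3 * t) ⊕ Fin n ⊕ Fin n ⊕ Fin (3 * t + 1))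

@[simp] lemma sC_inj {i i' : Fin n} : (sC (t:=t) i = sC i') ↔ i = i' := by
  show (some _ : Cand14' t n) = some _ ↔ _ ; simp [sC]
@[simp] lemma s'C_inj {i i' : Fin n} : (s'C (t:=t) i = s'C i') ↔ i = i' := by
  show (some _ : Cand14' t n) = some _ ↔ _ ; simp [s'C]
@[simp] lemma bC_inj {j j' : Fin (3*t)} : (bC (n:=n) j = bC j') ↔ j = j' := by
  show (some _ : Cand14' t n) = some _ ↔ _ ; simp [bC]
@[simp] lemma dC_inj {j j' : Fin (3*t+1)} : (dC (n:=n) j = dC j') ↔ j = j' := by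
  show (some _ : Cand14' t n) = some _ ↔ _ ; simp [dC]
@[simp] lemma pC_ne_sC {i : Fin n} : pC (t:=t) ≠ sC i := fun h => by cases h
@[simp] lemma pC_ne_s'C {i : Fin n} : pC (t:=t) ≠ s'C i := fun h => by cases h
@[simp] lemma pC_ne_bC {j : Fin (3*t)} : pC (n:=n) ≠ bC j := fun h => by cases h
@[simp] lemma pC_ne_dC {j : Fin (3*t+1)} : pC (n:=n) ≠ dC j := fun h => by cases h
@[simp] lemma sC_ne_pC {i : Fin n} : sC (t:=t) i ≠ pC := fun h => by cases h
@[simp] lemma s'C_ne_pC {i : Fin n} : s'C (t:=t) i ≠ pC := fun h => by cases h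
@[simp] lemma bC_ne_pC {j : Fin (3*t)} : bC (n:=n) j ≠ pC := fun h => by cases h
@[simp] lemma dC_ne_pC {j : Fin (3*t+1)} : dC (n:=n) j ≠ pC := fun h => by cases h
@[simp] lemma sC_ne_s'C {i i' : Fin n} : sC (t:=t) i ≠ s'C i' := by
  show (some _ : Cand14' t n) ≠ some _ ; simp [sC, s'C]
@[simp] lemma s'C_ne_sC {i i' : Fin n} : s'C (t:=t) i ≠ sC i' := by
  show (some _ : Cand14' t n) ≠ some _ ; simp [sC, s'C]
@[simp] lemma sC_ne_bC {i : Fin n} {j : Fin (3*t)} : sC i ≠ bC j := by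
  show (some _ : Cand14' t n) ≠ some _ ; simp [sC, bC]
@[simp] lemma bC_ne_sC {i : Fin n} {j : Fin (3*t)} : bC j ≠ sC i := by
  show (some _ : Cand14' t n) ≠ some _ ; simp [sC, bC]
@[simp] lemma s'C_ne_bC {i : Fin n} {j : Fin (3*t)} : s'C i ≠ bC j := by
  show (some _ : Cand14' t n) ≠ some _ ; simp [s'C, bC]
@[simp] lemma bC_ne_s'C {i : Fin n} {j : Fin (3*t)} : bC j ≠ s'C i := by
  show (some _ : Cand14' t n) ≠ some _ ; simp [s'C, bC]
@[simp] lemma sC_ne_dC {i : Fin n} {j : Fin (3*t+1)} : sC i ≠ dC j := by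
  show (some _ : Cand14' t n) ≠ some _ ; simp [sC, dC]
@[simp] lemma dC_ne_sC {i : Fin n} {j : Fin (3*t+1)} : dC j ≠ sC i := by
  show (some _ : Cand14' t n) ≠ some _ ; simp [sC, dC]
@[simp] lemma s'C_ne_dC {i : Fin n} {j : Fin (3*t+1)} : s'C i ≠ dC j := by
  show (some _ : Cand14' t n) ≠ some _ ; simp [s'C, dC]
@[simp] lemma dC_ne_s'C {i : Fin n} {j : Fin (3*t+1)} : dC j ≠ s'C i := by
  show (some _ : Cand14' t n) ≠ some _ ; simp [s'C, dC]
@[simp] lemma bC_ne_dC {j : Fin (3*t)} {k : Fin (3*t+1)} : bC (n:=n) j ≠ dC k := by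
  show (some _ : Cand14' t n) ≠ some _ ; simp [bC, dC]
@[simp] lemma dC_ne_bC {j : Fin (3*t)} {k : Fin (3*t+1)} : dC (n:=n) k ≠ bC j := by
  show (some _ : Cand14' t n) ≠ some _ ; simp [bC, dC]

lemma sum_map_singleton {α β : Type*} (s : Finset α) (f : α → β) :
    ∑ i ∈ s, ({f i} : Multiset β) = s.val.map f := by
  induction s using Finset.cons_induction with
  | empty => simp
  | cons a s ha ih =>
    rw [Finset.sum_cons, ih, Finset.cons_val, Multiset.map_cons, ← Multiset.singleton_add]

@[simp] lemma appScore14_add (M N : Multiset (ℕ × Finset (Cand14 t n))) (c : Cand14 t n) :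
    appScore14 (M + N) c = appScore14 M c + appScore14 N c := by
  simp [appScore14]

@[simp] lemma appScore14_singleton (x : ℕ × Finset (Cand14 t n)) (c : Cand14 t n) :
    appScore14 {x} c = if c ∈ x.2 then x.1 else 0 := by
  simp [appScore14]

@[simp] lemma appScore14_replicate (m : ℕ) (x : ℕ × Finset (Cand14 t n)) (c : Cand14 t n) :
    appScore14 (Multiset.replicate m x) c = m * (if c ∈ x.2 then x.1 else 0) := by
  simp [appScore14, Multiset.map_replicate, Multiset.sum_replicate, smul_eq_mul]

lemma appScore14_map {α : Type*} (s : Finset α) (f : α → ℕ × Finset (Cand14 t n))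
    (c : Cand14 t n) :
    appScore14 (s.val.map f) c = ∑ i ∈ s, (if c ∈ (f i).2 then (f i).1 else 0) := by
  rw [appScore14, Multiset.map_map]; rfl

lemma appScore14_finsum {α : Type*} (s : Finset α)
    (F : α → Multiset (ℕ × Finset (Cand14 t n))) (c : Cand14 t n) :
    appScore14 (∑ i ∈ s, F i) c = ∑ i ∈ s, appScore14 (F i) c := by
  induction s using Finset.cons_induction with
  | empty => simp [appScore14]
  | cons a s ha ih => rw [Finset.sum_cons, Finset.sum_cons, appScore14_add, ih]

end Aux

def remaining14 (t n : ℕ) (S : Fin n → Finset (Fin (3 * t)))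
    (e : Fin n → Fin 3 → Fin (3 * t)) (I : Finset (Fin n)) :
    Multiset (ℕ × Finset (Cand14 t n)) :=
  (I.val.map (fun i => (2, ({sC i, s'C i} : Finset (Cand14 t n))))) +
  ((Finset.univ \ I).val.map (fun i => (1, ({sC i, bC (e i 0)} : Finset (Cand14 t n))))) +
  ((Finset.univ \ I).val.map (fun i => (1, ({sC i, bC (e i 1)} : Finset (Cand14 t n))))) +
  ((Finset.univ \ I).val.map (fun i => (1, ({s'C i, bC (e i 2)} : Finset (Cand14 t n))))) +
  {(2, ({pC, dC 0} : Finset (Cand14 t n)))} +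
  ∑ j : Fin (3 * t),
      Multiset.replicate (3 - (Finset.univ.filter (fun i => j ∈ S i)).card)
        (1, ({bC j, dC j.succ} : Finset (Cand14 t n)))

lemma split14 (t n : ℕ) (S : Fin n → Finset (Fin (3 * t)))
    (e : Fin n → Fin 3 → Fin (3 * t)) (I : Finset (Fin n)) :
    election14 t n S e = deleted14 t n e I + remaining14 t n S e I := by
  have hper : ∀ i, perSet14 t n e i =
      ({(2, ({sC i, s'C i} : Finset (Cand14 t n)))} : Multiset _) +
      {(1, ({sC i, bC (e i 0)} : Finset (Cand14 t n)))} +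
      {(1, ({sC i, bC (e i 1)} : Finset (Cand14 t n)))} +
      {(1, ({s'C i, bC (e i 2)} : Finset (Cand14 t n)))} := fun i => rfl
  rw [election14, deleted14, remaining14]
  simp only [hper, Finset.sum_add_distrib]
  rw [← sum_map_singleton I, ← sum_map_singleton I, ← sum_map_singleton I, ← sum_map_singleton I,
    ← sum_map_singleton (Finset.univ \ I), ← sum_map_singleton (Finset.univ \ I),
    ← sum_map_singleton (Finset.univ \ I), ← sum_map_singleton (Finset.univ \ I)]
  rw [← Finset.sum_sdiff (Finset.subset_univ I) (f := fun i => ({(2, ({sC i, s'C i} : Finset (Cand14 t n)))} : Multiset _)),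
      ← Finset.sum_sdiff (Finset.subset_univ I) (f := fun i => ({(1, ({sC i, bC (e i 0)} : Finset (Cand14 t n)))} : Multiset _)),
      ← Finset.sum_sdiff (Finset.subset_univ I) (f := fun i => ({(1, ({sC i, bC (e i 1)} : Finset (Cand14 t n)))} : Multiset _)),
      ← Finset.sum_sdiff (Finset.subset_univ I) (f := fun i => ({(1, ({s'C i, bC (e i 2)} : Finset (Cand14 t n)))} : Multiset _))]
  abel


/-- forward direction of the WCCDV-for-2-approval hardness construction from
X3C′: if `I` is an exact cover (`|I| = t`, every `b_j` covered), then deleting the `n − t`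
weight-2 voters for the sets not in the cover together with the `3t` weight-1 voters for
the sets in the cover makes `p` a winner: afterwards `score(p) = 2`, each `score(s_i) ≤ 2`,
each `score(s'_i) ≤ 2`, each `score(b_j) = 2`, each dummy has score at most 2. -/
theorem stmt14 (t n : ℕ) (S : Fin n → Finset (Fin (3 * t)))
    (e : Fin n → Fin 3 → Fin (3 * t))
    (hSe : ∀ i, S i = Finset.univ.image (e i))
    (heInj : ∀ i, Function.Injective (e i))
    (hocc : ∀ j : Fin (3 * t), 1 ≤ (Finset.univ.filter (fun i => j ∈ S i)).card ∧
        (Finset.univ.filter (fun i => j ∈ S i)).card ≤ 3)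
    (I : Finset (Fin n)) (hI : I.card = t)
    (hcover : ∀ j : Fin (3 * t), ∃ i ∈ I, j ∈ S i) :
    appScore14 (election14 t n S e - deleted14 t n e I) pC = 2 ∧
    (∀ i, appScore14 (election14 t n S e - deleted14 t n e I) (sC i) ≤ 2) ∧
    (∀ i, appScore14 (election14 t n S e - deleted14 t n e I) (s'C i) ≤ 2) ∧
    (∀ j, appScore14 (election14 t n S e - deleted14 t n e I) (bC j) = 2) ∧
    (∀ j, appScore14 (election14 t n S e - deleted14 t n e I) (dC j) ≤ 2) ∧
    (∀ c, appScore14 (election14 t n S e - deleted14 t n e I) c ≤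
          appScore14 (election14 t n S e - deleted14 t n e I) pC) := by
  have hrem : election14 t n S e - deleted14 t n e I = remaining14 t n S e I := by
    rw [split14]; exact add_tsub_cancel_left _ _
  have hL : ∀ j, 1 ≤ (Finset.univ.filter (fun i => j ∈ S i)).card ∧
      (Finset.univ.filter (fun i => j ∈ S i)).card ≤ 3 := hocc
  have hcard3 : ∀ i, (S i).card = 3 := by
    intro i; rw [hSe, Finset.card_image_of_injective _ (heInj i)]; simp
  have hIfilter1 : ∀ j, (I.filter (fun i => j ∈ S i)).card = 1 := by
    have h1 : ∀ j : Fin (3*t), 1 ≤ (I.filter (fun i => j ∈ S i)).card := by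
      intro j; obtain ⟨i, hiI, hiS⟩ := hcover j
      exact Finset.card_pos.mpr ⟨i, Finset.mem_filter.mpr ⟨hiI, hiS⟩⟩
    have hsum : ∑ j : Fin (3*t), (I.filter (fun i => j ∈ S i)).card = 3 * t := by
      simp only [Finset.card_filter]
      rw [Finset.sum_comm]
      have hrow : ∀ i ∈ I, (∑ j : Fin (3*t), if j ∈ S i then 1 else 0) = 3 := by
        intro i _
        rw [Finset.sum_ite_mem, Finset.univ_inter, Finset.sum_const, hcard3 i]; rfl
      rw [Finset.sum_congr rfl hrow, Finset.sum_const, hI, smul_eq_mul, mul_comm]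
    intro j
    by_contra hne
    have hlt : (∑ _j : Fin (3*t), 1) < ∑ j : Fin (3*t), (I.filter (fun i => j ∈ S i)).card :=
      Finset.sum_lt_sum (fun k _ => h1 k) ⟨j, Finset.mem_univ j, by have := h1 j; omega⟩
    simp only [Finset.sum_const, Finset.card_univ, Fintype.card_fin, smul_eq_mul, mul_one] at hlt
    omega
  have hcompl : ∀ j, ((Finset.univ \ I).filter (fun i => j ∈ S i)).card
      = (Finset.univ.filter (fun i => j ∈ S i)).card - 1 := by
    intro j
    have hd : Disjoint (I.filter (fun i => j ∈ S i)) ((Finset.univ \ I).filter (fun i => j ∈ S i)) :=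
      Finset.disjoint_filter_filter Finset.disjoint_sdiff
    have hu : (Finset.univ.filter (fun i => j ∈ S i)).card
        = (I.filter (fun i => j ∈ S i)).card + ((Finset.univ \ I).filter (fun i => j ∈ S i)).card := by
      rw [← Finset.card_union_of_disjoint hd, ← Finset.filter_union,
        Finset.union_sdiff_of_subset (Finset.subset_univ I)]
    rw [hIfilter1 j] at hu; omega
  have hpoint : ∀ (j : Fin (3*t)) (i : Fin n),
      ((if j = e i 0 then 1 else 0) + (if j = e i 1 then 1 else 0) + (if j = e i 2 then 1 else 0) : ℕ)
      = if j ∈ S i then 1 else 0 := by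
    intro j i
    have h01 : e i 0 ≠ e i 1 := fun h => by simpa using heInj i h
    have h02 : e i 0 ≠ e i 2 := fun h => by simpa using heInj i h
    have h12 : e i 1 ≠ e i 2 := fun h => by simpa using heInj i h
    rw [hSe]
    simp only [Finset.mem_image, Finset.mem_univ, true_and]
    by_cases h0 : j = e i 0 <;> by_cases h1 : j = e i 1 <;> by_cases h2 : j = e i 2
    · exact absurd (h0.symm.trans h1) h01
    · exact absurd (h0.symm.trans h1) h01
    · exact absurd (h0.symm.trans h2) h02
    · rw [if_pos h0, if_neg h1, if_neg h2, if_pos ⟨0, h0.symm⟩]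
    · exact absurd (h1.symm.trans h2) h12
    · rw [if_neg h0, if_pos h1, if_neg h2, if_pos ⟨1, h1.symm⟩]
    · rw [if_neg h0, if_neg h1, if_pos h2, if_pos ⟨2, h2.symm⟩]
    · have hnex : ¬ ∃ x : Fin 3, e i x = j := by
        rintro ⟨x, hx⟩; fin_cases x <;> simp_all
      rw [if_neg h0, if_neg h1, if_neg h2, if_neg hnex]
  have hp : appScore14 (election14 t n S e - deleted14 t n e I) pC = 2 := by
    rw [hrem, remaining14]
    simp only [appScore14_add, appScore14_map, appScore14_singleton, appScore14_finsum,
      appScore14_replicate]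
    simp
  have hs : ∀ i, appScore14 (election14 t n S e - deleted14 t n e I) (sC i) ≤ 2 := by
    intro i
    rw [hrem, remaining14]
    simp only [appScore14_add, appScore14_map, appScore14_singleton, appScore14_finsum,
      appScore14_replicate]
    by_cases h : i ∈ I <;> simp [h]
  have hs' : ∀ i, appScore14 (election14 t n S e - deleted14 t n e I) (s'C i) ≤ 2 := by
    intro i
    rw [hrem, remaining14]
    simp only [appScore14_add, appScore14_map, appScore14_singleton, appScore14_finsum,
      appScore14_replicate]
    by_cases h : i ∈ I <;> simp [h]
  have hb : ∀ j, appScore14 (election14 t n S e - deleted14 t n e I) (bC j) = 2 := by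
    intro j
    rw [hrem, remaining14]
    simp only [appScore14_add, appScore14_map, appScore14_singleton, appScore14_finsum,
      appScore14_replicate, Finset.mem_insert, Finset.mem_singleton, bC_inj, bC_ne_sC,
      bC_ne_s'C, bC_ne_pC, bC_ne_dC, false_or, or_false, if_false, if_true, ite_self,
      mul_ite, mul_one, mul_zero, Finset.sum_ite_eq, Finset.mem_univ, if_pos,
      Finset.sum_const_zero, add_zero, zero_add]
    have key : (∑ i ∈ Finset.univ \ I, (if j = e i 0 then (1:ℕ) else 0))
        + (∑ i ∈ Finset.univ \ I, (if j = e i 1 then (1:ℕ) else 0))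
        + (∑ i ∈ Finset.univ \ I, (if j = e i 2 then (1:ℕ) else 0))
        = (Finset.univ.filter (fun i => j ∈ S i)).card - 1 := by
      rw [← Finset.sum_add_distrib, ← Finset.sum_add_distrib,
        Finset.sum_congr rfl (fun i _ => hpoint j i), ← Finset.card_filter]
      exact hcompl j
    have := hL j
    omega
  have hd : ∀ j, appScore14 (election14 t n S e - deleted14 t n e I) (dC j) ≤ 2 := by
    intro j
    induction j using Fin.cases with
    | zero =>
      rw [hrem, remaining14]
      have h0s : ∀ k : Fin (3*t), (0 : Fin (3*t+1)) ≠ k.succ := fun k => (Fin.succ_ne_zero k).symm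
      simp only [appScore14_add, appScore14_map, appScore14_singleton, appScore14_finsum,
        appScore14_replicate]
      simp [h0s]
    | succ k0 =>
      rw [hrem, remaining14]
      simp only [appScore14_add, appScore14_map, appScore14_singleton, appScore14_finsum,
        appScore14_replicate]
      simp [Fin.succ_ne_zero, Fin.succ_inj]
      have := (hL k0).1
      omega
  refine ⟨hp, hs, hs', hb, hd, ?_⟩
  intro c
  rw [hp]
  have hall : ∀ c : Option (Fin (3*t) ⊕ Fin n ⊕ Fin n ⊕ Fin (3*t+1)),
      appScore14 (election14 t n S e - deleted14 t n e I) c ≤ 2 := by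
    rintro (_ | (j | (i | (i | j))))
    exacts [hp.le, (hb j).le, hs i, hs' i, hd j]
  exact hall c
end

section
/- GBW sum bound for t-veto WCCAV: let gaps g_c = score(c) − score(p) > 0 be defined for the candidates c with initial surplus, and for each such c let i_c be the minimum size of a sub-multiset of the unregistered voters vetoing c whose total weight is at least g_c (assume each i_c exists). Then every set A of unregistered voters whose addition makes p a winner satisfies, for each such c, |{v ∈ A : v vetoes c}| ≥ i_c; and since each added vote vetoes at most t candidates, t·|A| ≥ Σ_c i_c, i.e., |A| ≥ (Σ_c i_c)/t. -/
/-- `t`-veto score: total weight of voters not vetoing `c`; each voter is a pair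
(weight, veto set). -/
def vetoScore {C : Type*} [DecidableEq C] (M : Multiset (ℕ × Finset C)) (c : C) : ℕ :=
  (M.map (fun v => if c ∈ v.2 then 0 else v.1)).sum

lemma aux_card_sum {C : Type*} [Fintype C] [DecidableEq C] (A : Multiset (ℕ × Finset C)) :
    ∑ c : C, Multiset.card (A.filter (fun u => c ∈ u.2)) = (A.map (fun u => u.2.card)).sum := by
  induction A using Multiset.induction with
  | empty => simp
  | cons a A ih =>
    simp only [Multiset.filter_cons, Multiset.card_add, Finset.sum_add_distrib, ih,
      Multiset.map_cons, Multiset.sum_cons]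
    have : ∑ c : C, Multiset.card (if c ∈ a.2 then ({a} : Multiset _) else 0) = a.2.card := by
      simp [apply_ite Multiset.card, Finset.sum_ite_mem]
    omega

/-- GBW sum bound for `t`-veto WCCAV. For each candidate `c` with initial
surplus `g_c = score(c) − score(p) > 0`, let `i_c` be the minimum size of a sub-multiset of
the unregistered voters vetoing `c` whose total weight is at least `g_c` (assumed to
exist). Then any set `A` of unregistered voters whose addition makes `p` a winner contains
at least `i_c` voters vetoing `c`, for every such `c`; and since each vote vetoes at most
`t` candidates, `t·|A| ≥ Σ_c i_c`. -/
theorem stmt15 {C : Type*} [Fintype C] [DecidableEq C] (t : ℕ)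
    (V U : Multiset (ℕ × Finset C)) (p : C)
    (hU : ∀ u ∈ U, u.2.card = t ∧ p ∉ u.2)
    (ic : C → ℕ)
    (hic : ∀ c : C, vetoScore V p < vetoScore V c →
      (∃ S ≤ U.filter (fun u => c ∈ u.2), Multiset.card S = ic c ∧
        vetoScore V c - vetoScore V p ≤ (S.map Prod.fst).sum) ∧
      (∀ S ≤ U.filter (fun u => c ∈ u.2),
        vetoScore V c - vetoScore V p ≤ (S.map Prod.fst).sum →
        ic c ≤ Multiset.card S)) :
    ∀ A ≤ U, (∀ c, vetoScore (V + A) c ≤ vetoScore (V + A) p) →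
      (∀ c, vetoScore V p < vetoScore V c →
        ic c ≤ Multiset.card (A.filter (fun u => c ∈ u.2))) ∧
      (∑ c ∈ Finset.univ.filter (fun c => vetoScore V p < vetoScore V c), ic c) ≤
        t * Multiset.card A := by
  intro A hA hwin
  have hAU : ∀ u ∈ A, u.2.card = t ∧ p ∉ u.2 := fun u hu => hU u (Multiset.mem_of_le hA hu)
  have hadd : ∀ c, vetoScore (V + A) c = vetoScore V c + vetoScore A c := by
    intro c; simp [vetoScore, Multiset.map_add]
  have hAp : vetoScore A p = (A.map Prod.fst).sum := by
    unfold vetoScore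
    congr 1
    apply Multiset.map_congr rfl
    intro u hu
    simp [(hAU u hu).2]
  have hsplit : ∀ c, vetoScore A c + ((A.filter (fun u => c ∈ u.2)).map Prod.fst).sum =
      (A.map Prod.fst).sum := by
    intro c
    conv_rhs => rw [← Multiset.filter_add_not (fun u => c ∈ u.2) A]
    rw [Multiset.map_add, Multiset.sum_add]
    have h1 : ((A.filter (fun u => c ∈ u.2)).map
        (fun v : ℕ × Finset C => if c ∈ v.2 then 0 else v.1)).sum = 0 := by
      apply Multiset.sum_eq_zero
      intro x hx
      obtain ⟨v, hv, rfl⟩ := Multiset.mem_map.mp hx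
      simp [(Multiset.mem_filter.mp hv).2]
    have h2 : ((A.filter (fun u => ¬ c ∈ u.2)).map
        (fun v : ℕ × Finset C => if c ∈ v.2 then 0 else v.1)) =
        (A.filter (fun u => ¬ c ∈ u.2)).map Prod.fst := by
      apply Multiset.map_congr rfl
      intro v hv
      simp [(Multiset.mem_filter.mp hv).2]
    have h0 : vetoScore A c = ((A.filter (fun u => ¬ c ∈ u.2)).map Prod.fst).sum := by
      unfold vetoScore
      conv_lhs => rw [← Multiset.filter_add_not (fun u => c ∈ u.2) A]
      rw [Multiset.map_add, Multiset.sum_add, h1, h2, zero_add]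
    omega
  have key : ∀ c, vetoScore V p < vetoScore V c →
      ic c ≤ Multiset.card (A.filter (fun u => c ∈ u.2)) := by
    intro c hc
    apply (hic c hc).2 (A.filter (fun u => c ∈ u.2))
      (Multiset.filter_le_filter _ hA)
    have hw := hwin c
    rw [hadd c, hadd p, hAp] at hw
    have := hsplit c
    omega
  refine ⟨key, ?_⟩
  calc (∑ c ∈ Finset.univ.filter (fun c => vetoScore V p < vetoScore V c), ic c)
      ≤ ∑ c ∈ Finset.univ.filter (fun c => vetoScore V p < vetoScore V c),
          Multiset.card (A.filter (fun u => c ∈ u.2)) := by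
        apply Finset.sum_le_sum
        intro c hc
        exact key c (Finset.mem_filter.mp hc).2
    _ ≤ ∑ c : C, Multiset.card (A.filter (fun u => c ∈ u.2)) :=
        Finset.sum_le_sum_of_subset (Finset.filter_subset _ _)
    _ = (A.map (fun u => u.2.card)).sum := aux_card_sum A
    _ = (A.map (fun _ => t)).sum := by
        congr 1
        apply Multiset.map_congr rfl
        intro u hu
        exact (hAU u hu).1
    _ = t * Multiset.card A := by
        simp [Multiset.map_const', Multiset.sum_replicate, Nat.mul_comm]
end

section
/- Equivalence of t-approval WCCAV and weighted multicover: given a weighted t-approval election (C,V), unregistered voters W = (w_1,…,w_n) all approving p, define for each c ∈ C \ {p} the covering requirement r_c = max(0, score_{(C,V)}(c) − score_{(C,V)}(p)), and for each w_i the set S_{w_i} of candidates w_i does not approve, with weight ω(w_i). Then for any I ⊆ {1,…,n}: adding the voters {w_i : i ∈ I} to (C,V) makes p a winner if and only if for every c ∈ C \ {p}, Σ_{i ∈ I, c ∈ S_{w_i}} ω(w_i) ≥ r_c. -/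
theorem appScore_add {C : Type*} [DecidableEq C] (M N : Multiset (ℕ × Finset C)) (c : C) :
    appScore (M + N) c = appScore M c + appScore N c := by
  simp [appScore]

theorem appScore_mapI {C : Type*} [DecidableEq C] {nn : ℕ} (w : Fin nn → ℕ × Finset C)
    (I : Finset (Fin nn)) (c : C) :
    appScore (I.val.map w) c = ∑ i ∈ I.filter (fun i => c ∈ (w i).2), (w i).1 := by
  rw [appScore, Multiset.map_map]
  rw [Finset.sum_filter]
  rfl

/-- Equivalence of `t`-approval WCCAV and weighted multicover. With covering
requirements `r_c = max(0, score_V(c) − score_V(p))` and, for each unregistered voter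
`w_i` (approving `p` and `t−1` others), the set `S_{w_i}` of candidates `w_i` does not
approve, weighted `ω(w_i)`: for any index set `I`, adding the voters `{w_i : i ∈ I}` makes
`p` a winner iff for every `c ≠ p`, `Σ_{i ∈ I, c ∈ S_{w_i}} ω(w_i) ≥ r_c`. -/
theorem stmt16 {C : Type*} [Fintype C] [DecidableEq C] (t nn : ℕ)
    (V : Multiset (ℕ × Finset C)) (p : C)
    (w : Fin nn → ℕ × Finset C)
    (hw : ∀ i, p ∈ (w i).2 ∧ (w i).2.card = t)
    (I : Finset (Fin nn)) :
    (∀ c, appScore (V + I.val.map w) c ≤ appScore (V + I.val.map w) p) ↔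
    (∀ c, c ≠ p →
      appScore V c - appScore V p ≤
        ∑ i ∈ I.filter (fun i => c ∉ (w i).2), (w i).1) := by
  have hp : I.filter (fun i => p ∈ (w i).2) = I := by
    apply Finset.filter_true_of_mem; intro i _; exact (hw i).1
  have key : ∀ c, ∑ i ∈ I, (w i).1 =
      ∑ i ∈ I.filter (fun i => c ∈ (w i).2), (w i).1 +
      ∑ i ∈ I.filter (fun i => c ∉ (w i).2), (w i).1 :=
    fun c => (Finset.sum_filter_add_sum_filter_not I _ _).symm
  constructor
  · intro h c hc
    have := h c
    rw [appScore_add, appScore_add, appScore_mapI, appScore_mapI, hp] at this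
    have k := key c
    omega
  · intro h c
    by_cases hc : c = p
    · subst hc; rfl
    · have := h c hc
      rw [appScore_add, appScore_add, appScore_mapI, appScore_mapI, hp]
      have k := key c
      omega
end
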